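/- Let $f : X \to Z$ be a universal homeomorphism of schemes factoring as $X \xrightarrow{g} Y \xrightarrow{h} Z$ where $g$ is dominant and $h$ is separated. Then both $g$ and $h$ are universal homeomorphisms. -/

import Mathlib

open AlgebraicGeometry CategoryTheory
open CategoryTheory.Limits

/-- A morphism of schemes is a universal homeomorphism if every base change of it is a
homeomorphism on underlying topological spaces. -/
def IsUniversalHomeomorphism : MorphismProperty Scheme :=
  MorphismProperty.universally (topologically @IsHomeomorph)

/-- A universally closed, universally injective, surjective morphism is a universal
homeomorphism. -/
lemma isUniversalHomeomorphism_of {X Y : Scheme} (f : X ⟶ Y) [UniversallyClosed f]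
    [UniversallyInjective f] [Surjective f] : IsUniversalHomeomorphism f := by
  intro X' Y' i₁ i₂ f' H
  have hc : IsClosedMap f'.base := UniversallyClosed.out _ _ _ H
  have hi : Function.Injective f'.base := UniversallyInjective.universally_injective _ _ _ H
  have hs : Surjective f' := MorphismProperty.of_isPullback (P := @Surjective) H.flip ‹_›
  exact isHomeomorph_iff_continuous_isClosedMap_bijective.mpr
    ⟨f'.continuous, hc, hi, hs.1⟩

/-- If `f = h ∘ g` is a universal homeomorphism of schemes, `g` is dominant and `h` is
separated, then both `g` and `h` are universal homeomorphisms. -/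
theorem stmt_10 {X Y Z : Scheme} (g : X ⟶ Y) (h : Y ⟶ Z)
    (hf : IsUniversalHomeomorphism (g ≫ h))
    (hg : Dense (Set.range g.base))
    (hh : IsSeparated h) :
    IsUniversalHomeomorphism g ∧ IsUniversalHomeomorphism h := by
  -- extract the three basic properties from `hf`
  have hfc : UniversallyClosed (g ≫ h) :=
    ⟨fun _ _ i₁ i₂ f' H => (hf i₁ i₂ f' H).isClosedMap⟩
  have hfi : UniversallyInjective (g ≫ h) :=
    ⟨fun _ _ i₁ i₂ f' H => (hf i₁ i₂ f' H).injective⟩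
  have hfs : Surjective (g ≫ h) := ⟨(hf _ _ _ .of_id_snd).surjective⟩
  -- `g` is universally closed via the graph factorization
  have hgc : UniversallyClosed g := by
    rw [← pullback.lift_snd (𝟙 _) g (Category.id_comp (g ≫ h))]
    have : UniversallyClosed (pullback.snd (g ≫ h) h) :=
      MorphismProperty.of_isPullback (P := @UniversallyClosed) (IsPullback.of_hasPullback (g ≫ h) h) hfc
    infer_instance
  -- `g` is universally injective via the graph factorization
  have hgi : UniversallyInjective g := by
    have h2 : UniversallyInjective (pullback.snd (g ≫ h) h) :=
      MorphismProperty.of_isPullback (P := @UniversallyInjective) (IsPullback.of_hasPullback (g ≫ h) h) hfi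
    have h1 : UniversallyInjective (pullback.lift (𝟙 X) g (Category.id_comp (g ≫ h))) :=
      inferInstance
    rw [← pullback.lift_snd (𝟙 _) g (Category.id_comp (g ≫ h))]
    exact MorphismProperty.comp_mem _ _ _ h1 h2
  -- `g` is surjective since it is closed with dense image
  have hgclosed : IsClosedMap g.base := hgc.out _ _ _ .of_id_snd
  have hgs : Surjective g := by
    refine ⟨Set.range_eq_univ.mp ?_⟩
    rw [← hgclosed.isClosed_range.closure_eq, hg.closure_eq]
  -- `h` is surjective
  have hhs : Surjective h := by
    refine ⟨fun z => ?_⟩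
    obtain ⟨x, hx⟩ := hfs.1 z
    exact ⟨g.base x, by rwa [Scheme.Hom.comp_apply] at hx⟩
  -- `h` is universally closed
  have hhc : UniversallyClosed h := UniversallyClosed.of_comp_surjective g h
  -- `h` is universally injective
  have hhi : UniversallyInjective h := by
    constructor
    intro Y'' Z'' i₁ i₂ h' H
    have hinj : Function.Injective (pullback.fst i₁ g ≫ h').base :=
      hfi.universally_injective _ _ _ ((IsPullback.of_hasPullback i₁ g).paste_horiz H)
    have hsurj : Function.Surjective (pullback.fst i₁ g).base :=
      (MorphismProperty.of_isPullback (P := @Surjective) (IsPullback.of_hasPullback i₁ g).flip hgs).1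
    intro a b hab
    obtain ⟨a', rfl⟩ := hsurj a
    obtain ⟨b', rfl⟩ := hsurj b
    have : (pullback.fst i₁ g ≫ h').base a' = (pullback.fst i₁ g ≫ h').base b' := by
      simpa [Scheme.Hom.comp_apply] using hab
    rw [hinj this]
  exact ⟨isUniversalHomeomorphism_of g, isUniversalHomeomorphism_of h⟩
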